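/- Let X be a metric space, ζ: 𝒮 → [0,+∞] a gauge on a class 𝒮 ⊆ 𝒫(X), A ⊆ X a nonempty set, μ a measure over X, and t > 0. Assume that (1) μ is a regular measure, (2) the class 𝒮_{μ,ζ} covers A finely, and (3) the Federer density satisfies F^ζ(μ,x) < t for every x ∈ A. Then μ(E) ≤ t·ψ_ζ(E) for every E ⊆ A. -/

import Mathlib

open MeasureTheory Set ENNReal Filter

noncomputable section

/-- The subclass `𝒮_{μ,ζ}` of a class of sets `𝒮`, obtained by removing the sets `S`
where `ζ S = μ S = 0` or `ζ S = μ S = +∞`. -/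
def goodClass {X : Type*} [MetricSpace X] (μ : OuterMeasure X) (𝒮 : Set (Set X))
    (ζ : Set X → ℝ≥0∞) : Set (Set X) :=
  {S ∈ 𝒮 | ¬ ((ζ S = 0 ∧ μ S = 0) ∨ (ζ S = ⊤ ∧ μ S = ⊤))}

/-- The quotient function `Q_{μ,ζ}`: equals `+∞` if `ζ S = 0`, `μ S / ζ S` if
`0 < ζ S < +∞`, and `0` if `ζ S = +∞` (note `a / ⊤ = 0` in `ℝ≥0∞`). -/
def fedQuot {X : Type*} [MetricSpace X] (μ : OuterMeasure X) (ζ : Set X → ℝ≥0∞)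
    (S : Set X) : ℝ≥0∞ :=
  if ζ S = 0 then ⊤ else μ S / ζ S

/-- A family of sets `ℱ` covers `A` finely: for every `a ∈ A` and every `ε > 0` there is
`S ∈ ℱ` containing `a` with `diam S < ε`. -/
def CoversFinely {X : Type*} [MetricSpace X] (ℱ : Set (Set X)) (A : Set X) : Prop :=
  ∀ a ∈ A, ∀ ε : ℝ≥0∞, 0 < ε → ∃ S ∈ ℱ, a ∈ S ∧ EMetric.diam S < ε

/-- The Federer density `F^ζ(μ,x)`. -/
def federerDensity {X : Type*} [MetricSpace X] (μ : OuterMeasure X) (𝒮 : Set (Set X))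
    (ζ : Set X → ℝ≥0∞) (x : X) : ℝ≥0∞ :=
  ⨅ (ε : ℝ≥0∞) (_ : 0 < ε),
    ⨆ (S : Set X) (_ : S ∈ goodClass μ 𝒮 ζ) (_ : x ∈ S) (_ : EMetric.diam S < ε),
      fedQuot μ ζ S

/-- The size-`δ` premeasure `φ_{ζ,δ}` of the Carathéodory construction. -/
def preCarMeasure {X : Type*} [MetricSpace X] (𝒮 : Set (Set X)) (ζ : Set X → ℝ≥0∞)
    (δ : ℝ≥0∞) (R : Set X) : ℝ≥0∞ :=
  ⨅ (E : ℕ → Set X) (_ : ∀ j, E j ∈ 𝒮) (_ : ∀ j, EMetric.diam (E j) ≤ δ)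
    (_ : R ⊆ ⋃ j, E j), ∑' j, ζ (E j)

/-- The Carathéodory measure `ψ_ζ`. -/
def carMeasure {X : Type*} [MetricSpace X] (𝒮 : Set (Set X)) (ζ : Set X → ℝ≥0∞)
    (R : Set X) : ℝ≥0∞ :=
  ⨆ (δ : ℝ≥0∞) (_ : 0 < δ), preCarMeasure 𝒮 ζ δ R

/-- The `τ`-enlargement `Ŝ` of a set `S`. -/
def enlargement {X : Type*} [MetricSpace X] (μ : OuterMeasure X) (𝒮 : Set (Set X))
    (ζ : Set X → ℝ≥0∞) (τ : ℝ) (S : Set X) : Set X :=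
  ⋃₀ {T ∈ goodClass μ 𝒮 ζ | (T ∩ S).Nonempty ∧
      EMetric.diam T ≤ ENNReal.ofReal τ * EMetric.diam S}

/-- `μ` is a regular (outer) measure: every set is contained in a `μ`-measurable set of
the same measure. -/
def IsRegularOM {X : Type*} [MetricSpace X] (μ : OuterMeasure X) : Prop :=
  ∀ E : Set X, ∃ F : Set X, E ⊆ F ∧ μ.IsCaratheodory F ∧ μ F = μ E

/-- `μ` is a Borel (outer) measure: every Borel set is `μ`-measurable. -/
def IsBorelOM {X : Type*} [MetricSpace X] (μ : OuterMeasure X) : Prop :=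
  ∀ E : Set X, MeasurableSet[borel X] E → μ.IsCaratheodory E

/-- `μ` is a Borel regular (outer) measure. -/
def IsBorelRegularOM {X : Type*} [MetricSpace X] (μ : OuterMeasure X) : Prop :=
  IsBorelOM μ ∧ ∀ E : Set X, ∃ B : Set X, E ⊆ B ∧ MeasurableSet[borel X] B ∧ μ B = μ E

/-- Carathéodory measurability of a set with respect to a set function. -/
def SetFnCaratheodory {X : Type*} (ν : Set X → ℝ≥0∞) (E : Set X) : Prop :=
  ∀ T : Set X, ν T = ν (T ∩ E) + ν (T \ E)

/-- `μ⌊A << ν⌊A`: absolute continuity of the restrictions to `A`. -/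
def AbsContOn {X : Type*} [MetricSpace X] (μ : OuterMeasure X) (ν : Set X → ℝ≥0∞)
    (A : Set X) : Prop :=
  ∀ E : Set X, ν (A ∩ E) = 0 → μ (A ∩ E) = 0

/-- `S` is σ-finite with respect to the set function `ν`. -/
def SigmaFiniteWrt {X : Type*} (ν : Set X → ℝ≥0∞) (S : Set X) : Prop :=
  ∃ E : ℕ → Set X, S ⊆ ⋃ j, E j ∧ ∀ j, ν (E j) < ⊤

/-- The integral `∫_B f dν` with respect to an (outer) set function `ν`,
via the layer-cake formula. -/
def omIntegral {X : Type*} (ν : Set X → ℝ≥0∞) (B : Set X) (f : X → ℝ≥0∞) : ℝ≥0∞ :=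
  ∫⁻ t in Set.Ioi (0 : ℝ), ν {x ∈ B | ENNReal.ofReal t < f x}

/-- The enlargement condition: there are `c ≥ 1` and `η > 0` such that every
`S ∈ 𝒮_{μ,ζ}` admits `S̃ ∈ 𝒮` with `Ŝ ⊆ S̃`, `diam S̃ ≤ c diam S` and `ζ S̃ ≤ η ζ S`. -/
def EnlCondition {X : Type*} [MetricSpace X] (μ : OuterMeasure X) (𝒮 : Set (Set X))
    (ζ : Set X → ℝ≥0∞) (τ : ℝ) : Prop :=
  ∃ c : ℝ, 1 ≤ c ∧ ∃ η : ℝ, 0 < η ∧ ∀ S ∈ goodClass μ 𝒮 ζ, ∃ S' ∈ 𝒮,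
    enlargement μ 𝒮 ζ τ S ⊆ S' ∧ EMetric.diam S' ≤ ENNReal.ofReal c * EMetric.diam S ∧
      ζ S' ≤ ENNReal.ofReal η * ζ S

/-- The gauge `ζ_α(S) = c_α (diam S)^α`. -/
def zetaDiam {X : Type*} [MetricSpace X] (cα α : ℝ) (S : Set X) : ℝ≥0∞ :=
  ENNReal.ofReal cα * EMetric.diam S ^ α

/-- The family `ℱ` of closed subsets of `X`. -/
def closedSets (X : Type*) [MetricSpace X] : Set (Set X) := {S | IsClosed S}

/-- The family `ℱ_b` of closed balls of `X` (with positive radius). -/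
def closedBalls (X : Type*) [MetricSpace X] : Set (Set X) :=
  {S | ∃ (y : X) (r : ℝ), 0 < r ∧ S = Metric.closedBall y r}

/-- The family `ℱ_o` of open balls of `X` (with positive radius). -/
def openBalls (X : Type*) [MetricSpace X] : Set (Set X) :=
  {S | ∃ (y : X) (r : ℝ), 0 < r ∧ S = Metric.ball y r}

/-- The `α`-dimensional Hausdorff measure `ℋ^α` with normalizing constant `c_α`. -/
def hausdorffMeasureC (X : Type*) [MetricSpace X] (cα α : ℝ) : Set X → ℝ≥0∞ :=
  carMeasure (closedSets X) (zetaDiam cα α)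

/-- The `α`-dimensional spherical Hausdorff measure `𝒮^α` with constant `c_α`. -/
def sphericalMeasureC (X : Type*) [MetricSpace X] (cα α : ℝ) : Set X → ℝ≥0∞ :=
  carMeasure (closedBalls X) (zetaDiam cα α)

/-- `X` is diametrically regular. -/
def DiametricallyRegular (X : Type*) [MetricSpace X] : Prop :=
  ∀ x : X, ∃ R > (0 : ℝ), ∃ δ > (0 : ℝ), ∀ y ∈ Metric.ball x R,
    ContinuousOn (fun r : ℝ => EMetric.diam (Metric.ball y r)) (Set.Ioo 0 δ)

end

theorem regular_iUnion_le {X : Type*} [MetricSpace X] (μ : OuterMeasure X)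
    (h : ∀ E : Set X, ∃ F : Set X, E ⊆ F ∧ μ.IsCaratheodory F ∧ μ F = μ E)
    (B : ℕ → Set X) (hB : Monotone B) : μ (⋃ k, B k) ≤ ⨆ k, μ (B k) := by
  choose F hBF hFm hFe using fun k => h (B k)
  set G : ℕ → Set X := fun k => ⋂ m, F (k + m) with hG
  letI : MeasurableSpace X := μ.caratheodory
  have hGm : ∀ k, MeasurableSet (G k) := by
    intro k
    exact MeasurableSet.iInter fun m => (μ.isCaratheodory_iff).2 (hFm (k + m))
  have hBG : ∀ k, B k ⊆ G k := fun k =>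
    subset_iInter fun m => (hB (Nat.le_add_right k m)).trans (hBF (k + m))
  have hGmono : Monotone G := by
    intro k l hkl x hx
    simp only [hG, mem_iInter] at hx ⊢
    intro m
    have : k + (l - k + m) = l + m := by omega
    simpa [this] using hx (l - k + m)
  have hGB : ∀ k, μ (G k) ≤ μ (B k) := by
    intro k
    calc μ (G k) ≤ μ (F (k + 0)) := measure_mono (iInter_subset _ 0)
    _ = μ (B k) := by simpa using hFe k
  calc μ (⋃ k, B k) ≤ μ (⋃ k, G k) := measure_mono (iUnion_mono hBG)
    _ = μ.toMeasure le_rfl (⋃ k, G k) :=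
        (MeasureTheory.toMeasure_apply μ le_rfl (MeasurableSet.iUnion hGm)).symm
    _ = ⨆ k, μ.toMeasure le_rfl (G k) := (hGmono.directed_le).measure_iUnion
    _ ≤ ⨆ k, μ (B k) :=
        iSup_mono fun k => (MeasureTheory.toMeasure_apply μ le_rfl (hGm k)) ▸ hGB k

/-- if `μ` is regular, `𝒮_{μ,ζ}` covers `A` finely and the Federer density
is `< t` on `A`, then `μ E ≤ t ψ_ζ E` for every `E ⊆ A`. -/
theorem stmt0 {X : Type*} [MetricSpace X] (μ : MeasureTheory.OuterMeasure X)
    (𝒮 : Set (Set X)) (ζ : Set X → ℝ≥0∞) (A : Set X) (hA : A.Nonempty)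
    (t : ℝ) (ht : 0 < t)
    (h1 : IsRegularOM μ)
    (h2 : CoversFinely (goodClass μ 𝒮 ζ) A)
    (h3 : ∀ x ∈ A, federerDensity μ 𝒮 ζ x < ENNReal.ofReal t) :
    ∀ E ⊆ A, μ E ≤ ENNReal.ofReal t * carMeasure 𝒮 ζ E := by
  intro E hEA
  have ht0 : ENNReal.ofReal t ≠ 0 := (ENNReal.ofReal_pos.2 ht).ne'
  set sQ : ℝ≥0∞ → X → ℝ≥0∞ := fun ε x =>
    ⨆ (S : Set X) (_ : S ∈ goodClass μ 𝒮 ζ) (_ : x ∈ S) (_ : EMetric.diam S < ε),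
      fedQuot μ ζ S with hsQ
  have sQmono : ∀ x : X, ∀ ε ε' : ℝ≥0∞, ε ≤ ε' → sQ ε x ≤ sQ ε' x := by
    intro x ε ε' h
    refine iSup_le fun S => iSup_le fun hS => iSup_le fun hx => iSup_le fun hd => ?_
    exact le_iSup_of_le S (le_iSup_of_le hS (le_iSup_of_le hx
      (le_iSup_of_le (lt_of_lt_of_le hd h) le_rfl)))
  set Ak : ℕ → Set X := fun k =>
    {x ∈ A | sQ (((k : ℝ≥0∞) + 1)⁻¹) x < ENNReal.ofReal t} with hAk
  have hAkmono : Monotone Ak := by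
    intro k l hkl x hx
    refine ⟨hx.1, lt_of_le_of_lt (sQmono x _ _ ?_) hx.2⟩
    exact ENNReal.inv_le_inv' (add_le_add_left (by exact_mod_cast hkl) 1)
  have hAsub : A ⊆ ⋃ k, Ak k := by
    intro x hx
    have hd := h3 x hx
    rw [federerDensity, iInf_lt_iff] at hd
    obtain ⟨ε, hε⟩ := hd
    rw [iInf_lt_iff] at hε
    obtain ⟨hε0, hεlt⟩ := hε
    obtain ⟨n, hn⟩ := ENNReal.exists_inv_nat_lt hε0.ne'
    refine mem_iUnion.2 ⟨n, hx, lt_of_le_of_lt (sQmono x _ _ ?_) hεlt⟩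
    calc ((n : ℝ≥0∞) + 1)⁻¹ ≤ (n : ℝ≥0∞)⁻¹ := ENNReal.inv_le_inv' le_self_add
      _ ≤ ε := hn.le
  -- key estimate
  have key : ∀ k : ℕ, ∀ S : Set X, S ∈ 𝒮 → EMetric.diam S < ((k : ℝ≥0∞) + 1)⁻¹ →
      (S ∩ Ak k).Nonempty → μ S ≤ ENNReal.ofReal t * ζ S := by
    intro k S hS hdiam ⟨a, haS, haA⟩
    by_cases hgood : S ∈ goodClass μ 𝒮 ζ
    · have hQ : fedQuot μ ζ S < ENNReal.ofReal t := by
        refine lt_of_le_of_lt ?_ haA.2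
        exact le_iSup_of_le S (le_iSup_of_le hgood (le_iSup_of_le haS
          (le_iSup_of_le hdiam le_rfl)))
      by_cases hζ0 : ζ S = 0
      · rw [fedQuot, if_pos hζ0] at hQ
        exact absurd hQ (by simp)
      · rw [fedQuot, if_neg hζ0] at hQ
        by_cases hζt : ζ S = ⊤
        · rw [hζt, ENNReal.mul_top ht0]; exact le_top
        · exact ((ENNReal.div_lt_iff (Or.inl hζ0) (Or.inl hζt)).1 hQ).le
    · rw [goodClass, mem_sep_iff, not_and, not_not] at hgood
      rcases hgood hS with ⟨_, hμ0⟩ | ⟨hζt, _⟩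
      · simp [hμ0]
      · rw [hζt, ENNReal.mul_top ht0]; exact le_top
  -- per-k bound
  have hk : ∀ k : ℕ, μ (E ∩ Ak k) ≤ ENNReal.ofReal t * carMeasure 𝒮 ζ E := by
    intro k
    have hpos : (0 : ℝ≥0∞) < ((k : ℝ≥0∞) + 2)⁻¹ := by
      simp [ENNReal.inv_pos]
    have hpre : preCarMeasure 𝒮 ζ (((k : ℝ≥0∞) + 2)⁻¹) E ≤ carMeasure 𝒮 ζ E :=
      le_iSup_of_le (((k : ℝ≥0∞) + 2)⁻¹) (le_iSup_of_le hpos le_rfl)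
    refine le_trans ?_ (mul_le_mul_right hpre _)
    rw [mul_comm, ← ENNReal.div_le_iff_le_mul (Or.inl ht0) (Or.inl ENNReal.ofReal_ne_top)]
    refine le_iInf fun C => le_iInf fun hCS => le_iInf fun hCd => le_iInf fun hCcov => ?_
    rw [ENNReal.div_le_iff_le_mul (Or.inl ht0) (Or.inl ENNReal.ofReal_ne_top), mul_comm]
    calc μ (E ∩ Ak k) ≤ μ (⋃ j, C j ∩ (E ∩ Ak k)) := by
          refine measure_mono fun x hx => ?_
          obtain ⟨j, hj⟩ := mem_iUnion.1 (hCcov hx.1)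
          exact mem_iUnion.2 ⟨j, hj, hx⟩
      _ ≤ ∑' j, μ (C j ∩ (E ∩ Ak k)) := measure_iUnion_le _
      _ ≤ ∑' j, ENNReal.ofReal t * ζ (C j) := by
          refine ENNReal.tsum_le_tsum fun j => ?_
          by_cases hne : (C j ∩ (E ∩ Ak k)).Nonempty
          · refine le_trans (measure_mono inter_subset_left) ?_
            refine key k (C j) (hCS j) (lt_of_le_of_lt (hCd j) ?_) ?_
            · exact ENNReal.inv_lt_inv.2 (by gcongr <;> norm_num)
            · exact hne.mono (inter_subset_inter_right _ inter_subset_right)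
          · rw [not_nonempty_iff_eq_empty] at hne
            simp [hne]
      _ = ENNReal.ofReal t * ∑' j, ζ (C j) := ENNReal.tsum_mul_left
  -- assemble
  calc μ E ≤ μ (⋃ k, E ∩ Ak k) := by
        refine measure_mono fun x hx => ?_
        obtain ⟨j, hj⟩ := mem_iUnion.1 (hAsub (hEA hx))
        exact mem_iUnion.2 ⟨j, hx, hj⟩
    _ ≤ ⨆ k, μ (E ∩ Ak k) :=
        regular_iUnion_le μ h1 _ fun k l hkl => inter_subset_inter_right _ (hAkmono hkl)
    _ ≤ ENNReal.ofReal t * carMeasure 𝒮 ζ E := iSup_le hk
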